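/- Let P be a Markov kernel on ℝ^d, f : ℝ^d → (0,∞) bounded measurable, γ > 1, and suppose we have random variables X_T, Y_T on a probability space with law(X_T) having density given by P(x,·) under ℙ, a nonnegative random variable R_T with E R_T = 1 such that law(Y_T) under R_T ℙ is P(y,·), and X_T = Y_T ℙ-a.s. Then (P f(y))^γ = (E[R_T f(Y_T)])^γ ≤ (E R_T^{γ/(γ−1)})^{γ−1} · E f^γ(X_T) = (E R_T^{γ/(γ−1)})^{γ−1} · P f^γ(x). -/

import Mathlib

open MeasureTheory ProbabilityTheory

theorem stmt_15 (d : ℕ)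
    (P : Kernel (EuclideanSpace ℝ (Fin d)) (EuclideanSpace ℝ (Fin d)))
    [IsMarkovKernel P]
    (f : EuclideanSpace ℝ (Fin d) → ℝ) (hf_meas : Measurable f)
    (hf_pos : ∀ z, 0 < f z) (Cf : ℝ) (hf_bd : ∀ z, f z ≤ Cf)
    (γ : ℝ) (hγ : 1 < γ)
    {Ω : Type*} [MeasurableSpace Ω] (μ : Measure Ω) [IsProbabilityMeasure μ]
    (X Y : Ω → EuclideanSpace ℝ (Fin d)) (hX : Measurable X) (hY : Measurable Y)
    (R : Ω → ℝ) (hR_meas : Measurable R) (hR_nonneg : ∀ ω, 0 ≤ R ω)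
    (hR_int : Integrable R μ) (hR_mean : ∫ ω, R ω ∂μ = 1)
    (hR_pow_int : Integrable (fun ω => R ω ^ (γ/(γ-1))) μ)
    (x y : EuclideanSpace ℝ (Fin d))
    (hXlaw : Measure.map X μ = P x)
    (hYlaw : Measure.map Y (μ.withDensity (fun ω => ENNReal.ofReal (R ω))) = P y)
    (hcouple : X =ᵐ[μ] Y) :
    (∫ z, f z ∂(P y)) ^ γ ≤
      (∫ ω, R ω ^ (γ/(γ-1)) ∂μ) ^ (γ - 1) * ∫ z, f z ^ γ ∂(P x) := by
  set p : ℝ := γ / (γ - 1) with hp_def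
  have hγ0 : (0:ℝ) < γ - 1 := by linarith
  have hγpos : (0:ℝ) < γ := by linarith
  have hpq : p.HolderConjugate γ := by
    exact ((Real.holderConjugate_iff_eq_conjExponent hγ).mpr hp_def).symm
  -- Step 1: ∫ f d(P y) = ∫ R · f∘Y dμ
  have key : ∫ z, f z ∂(P y) = ∫ ω, R ω * f (Y ω) ∂μ := by
    rw [← hYlaw, integral_map hY.aemeasurable hf_meas.aestronglyMeasurable]
    have : (fun ω => ENNReal.ofReal (R ω)) = fun ω => ((R ω).toNNReal : ENNReal) := by
      rfl
    rw [this, integral_withDensity_eq_integral_smul hR_meas.real_toNNReal]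
    refine integral_congr_ae (Filter.Eventually.of_forall fun ω => ?_)
    simp [NNReal.smul_def, Real.coe_toNNReal _ (hR_nonneg ω)]
  -- Memℒp facts
  have hRmem : MemLp R (ENNReal.ofReal p) μ := by
    have hq0 : ENNReal.ofReal p ≠ 0 := by
      simp [ENNReal.ofReal_eq_zero, not_le, hpq.pos]
    have := (memLp_norm_rpow_iff (μ := μ) (q := ENNReal.ofReal p) (p := ENNReal.ofReal p)
      hR_meas.aestronglyMeasurable hq0 ENNReal.ofReal_ne_top)
    rw [ENNReal.div_self hq0 ENNReal.ofReal_ne_top] at this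
    rw [← this, memLp_one_iff_integrable]
    have : (fun x => ‖R x‖ ^ (ENNReal.ofReal p).toReal) = fun ω => R ω ^ p := by
      funext ω
      rw [ENNReal.toReal_ofReal hpq.nonneg, Real.norm_of_nonneg (hR_nonneg ω)]
    rw [this]
    exact hR_pow_int
  have hfYmem : MemLp (fun ω => f (Y ω)) (ENNReal.ofReal γ) μ := by
    refine MemLp.of_bound (hf_meas.comp hY).aestronglyMeasurable Cf
      (Filter.Eventually.of_forall fun ω => ?_)
    rw [Real.norm_of_nonneg (hf_pos _).le]
    exact hf_bd _
  -- Hölder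
  have holder : ∫ ω, R ω * f (Y ω) ∂μ ≤
      (∫ ω, R ω ^ p ∂μ) ^ (1/p) * (∫ ω, f (Y ω) ^ γ ∂μ) ^ (1/γ) :=
    integral_mul_le_Lp_mul_Lq_of_nonneg hpq
      (Filter.Eventually.of_forall hR_nonneg)
      (Filter.Eventually.of_forall fun ω => (hf_pos _).le) hRmem hfYmem
  -- transfer ∫ f(Y)^γ to ∫ f^γ d(P x)
  have hXY : ∫ ω, f (Y ω) ^ γ ∂μ = ∫ z, f z ^ γ ∂(P x) := by
    rw [← hXlaw, integral_map hX.aemeasurable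
      ((hf_meas.pow_const γ).aestronglyMeasurable)]
    exact integral_congr_ae (hcouple.mono fun ω h => by simp only [h])
  -- nonnegativity
  have h1 : (0:ℝ) ≤ ∫ ω, R ω * f (Y ω) ∂μ :=
    integral_nonneg fun ω => mul_nonneg (hR_nonneg ω) (hf_pos _).le
  have h2 : (0:ℝ) ≤ ∫ ω, R ω ^ p ∂μ := integral_nonneg fun ω => Real.rpow_nonneg (hR_nonneg ω) _
  have h3 : (0:ℝ) ≤ ∫ ω, f (Y ω) ^ γ ∂μ :=
    integral_nonneg fun ω => Real.rpow_nonneg (hf_pos _).le _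
  calc (∫ z, f z ∂(P y)) ^ γ
      ≤ ((∫ ω, R ω ^ p ∂μ) ^ (1/p) * (∫ ω, f (Y ω) ^ γ ∂μ) ^ (1/γ)) ^ γ := by
        rw [key]
        exact Real.rpow_le_rpow h1 holder hγpos.le
    _ = (∫ ω, R ω ^ p ∂μ) ^ (γ - 1) * ∫ ω, f (Y ω) ^ γ ∂μ := by
        have hexp : 1/p*γ = γ-1 := by rw [hp_def]; field_simp
        have hexp2 : 1/γ*γ = 1 := by field_simp
        rw [Real.mul_rpow (Real.rpow_nonneg h2 _) (Real.rpow_nonneg h3 _),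
          ← Real.rpow_mul h2, ← Real.rpow_mul h3, hexp, hexp2, Real.rpow_one]
    _ = (∫ ω, R ω ^ p ∂μ) ^ (γ - 1) * ∫ z, f z ^ γ ∂(P x) := by rw [hXY]
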